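/- Let V : [0,∞) → M_n(ℂ) be continuous with V(x)† = V(x) for all x, and let κ, μ be real numbers with κ² ≠ μ². Let Φ, Ψ : [0,∞) → M_n(ℂ) be twice continuously differentiable with Φ''(x) = (V(x) + κ²·I)·Φ(x) and Ψ''(x) = (V(x) + μ²·I)·Ψ(x) for all x ≥ 0. Let W⁺ : [0,∞) → M_n(ℂ) be differentiable with W⁺(x)† = W⁺(x) and (W⁺)'(x) = W⁺(x)·Φ(x)†Φ(x)·W⁺(x) for all x. Define q(x) := Φ'(x)†·Ψ(x) − Φ(x)†·Ψ'(x) and T(x) := Ψ(x) + (κ²−μ²)⁻¹·Φ(x)·W⁺(x)·q(x). Then for all x ≥ 0: T(x)†·T(x) − Ψ(x)†·Ψ(x) = (κ²−μ²)⁻²·(d/dx)[q(x)†·W⁺(x)·q(x)]. (Identity (6.168): the difference of the normalization integrands is an exact derivative; integrating it yields Theorem 6.6(b), the invariance of the Gel'fand–Levitan normalization matrices C_j, 1 ≤ j ≤ N−1, under removal of the bound state at k = iκ_N.) -/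

import Mathlib

open Matrix Set

attribute [local instance] Matrix.normedAddCommGroup Matrix.normedSpace


theorem matMulDeriv {n : ℕ} {s : Set ℝ} {x : ℝ}
    {f g : ℝ → Matrix (Fin n) (Fin n) ℂ} {A B : Matrix (Fin n) (Fin n) ℂ}
    (hf : HasDerivWithinAt f A s x) (hg : HasDerivWithinAt g B s x) :
    HasDerivWithinAt (fun t => f t * g t) (A * g x + f x * B) s x := by
  refine hasDerivWithinAt_pi.2 fun i => ?_
  refine hasDerivWithinAt_pi.2 fun j => ?_
  have hfe : ∀ k l, HasDerivWithinAt (fun t => f t k l) (A k l) s x := fun k l =>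
    hasDerivWithinAt_pi.1 (hasDerivWithinAt_pi.1 hf k) l
  have hge : ∀ k l, HasDerivWithinAt (fun t => g t k l) (B k l) s x := fun k l =>
    hasDerivWithinAt_pi.1 (hasDerivWithinAt_pi.1 hg k) l
  have : HasDerivWithinAt (fun t => ∑ k, f t i k * g t k j)
      (∑ k, (A i k * g x k j + f x i k * B k j)) s x :=
    HasDerivWithinAt.fun_sum fun k _ => (hfe i k).mul (hge k j)
  simpa [Matrix.mul_apply, Matrix.add_apply, Finset.sum_add_distrib] using this

theorem matCTDeriv {n : ℕ} {s : Set ℝ} {x : ℝ}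
    {f : ℝ → Matrix (Fin n) (Fin n) ℂ} {A : Matrix (Fin n) (Fin n) ℂ}
    (hf : HasDerivWithinAt f A s x) :
    HasDerivWithinAt (fun t => (f t)ᴴ) Aᴴ s x := by
  refine hasDerivWithinAt_pi.2 fun i => ?_
  refine hasDerivWithinAt_pi.2 fun j => ?_
  have : HasDerivWithinAt (fun t => f t j i) (A j i) s x :=
    hasDerivWithinAt_pi.1 (hasDerivWithinAt_pi.1 hf j) i
  simpa [Matrix.conjTranspose_apply] using this.star

set_option maxHeartbeats 2000000 in
/-- Identity (6.168): with `q(x) = Φ'(x)†·Ψ(x) − Φ(x)†·Ψ'(x)` and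
`T(x) = Ψ(x) + (κ²−μ²)⁻¹·Φ(x)·W⁺(x)·q(x)`, the difference of the normalization
integrands is an exact derivative:
`T(x)†·T(x) − Ψ(x)†·Ψ(x) = (κ²−μ²)⁻²·(d/dx)[q(x)†·W⁺(x)·q(x)]` for all `x ≥ 0`. -/
theorem normalization_integrand_exact_derivative {n : ℕ}
    (V : ℝ → Matrix (Fin n) (Fin n) ℂ) (κ μ : ℝ)
    (hκμ : κ ^ 2 ≠ μ ^ 2)
    (Φ Φ' Φ'' Ψ Ψ' Ψ'' Wp : ℝ → Matrix (Fin n) (Fin n) ℂ)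
    (hVc : ContinuousOn V (Set.Ici (0:ℝ)))
    (hVherm : ∀ x ≥ (0:ℝ), (V x)ᴴ = V x)
    (hΦ1 : ∀ x ∈ Set.Ici (0:ℝ), HasDerivWithinAt Φ (Φ' x) (Set.Ici (0:ℝ)) x)
    (hΦ2 : ∀ x ∈ Set.Ici (0:ℝ), HasDerivWithinAt Φ' (Φ'' x) (Set.Ici (0:ℝ)) x)
    (hΦ''c : ContinuousOn Φ'' (Set.Ici (0:ℝ)))
    (hΨ1 : ∀ x ∈ Set.Ici (0:ℝ), HasDerivWithinAt Ψ (Ψ' x) (Set.Ici (0:ℝ)) x)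
    (hΨ2 : ∀ x ∈ Set.Ici (0:ℝ), HasDerivWithinAt Ψ' (Ψ'' x) (Set.Ici (0:ℝ)) x)
    (hΨ''c : ContinuousOn Ψ'' (Set.Ici (0:ℝ)))
    (hΦeq : ∀ x ≥ (0:ℝ), Φ'' x = (V x + ((κ:ℂ)^2) • 1) * Φ x)
    (hΨeq : ∀ x ≥ (0:ℝ), Ψ'' x = (V x + ((μ:ℂ)^2) • 1) * Ψ x)
    (hWpherm : ∀ x ≥ (0:ℝ), (Wp x)ᴴ = Wp x)
    (hWp : ∀ x ∈ Set.Ici (0:ℝ),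
      HasDerivWithinAt Wp (Wp x * ((Φ x)ᴴ * Φ x) * Wp x) (Set.Ici (0:ℝ)) x) :
    ∀ x ≥ (0:ℝ), ∃ d : Matrix (Fin n) (Fin n) ℂ,
      HasDerivWithinAt
        (fun t => ((Φ' t)ᴴ * Ψ t - (Φ t)ᴴ * Ψ' t)ᴴ * Wp t *
          ((Φ' t)ᴴ * Ψ t - (Φ t)ᴴ * Ψ' t)) d (Set.Ici (0:ℝ)) x ∧
      (Ψ x + (((κ:ℂ)^2 - (μ:ℂ)^2)⁻¹ : ℂ) •
          (Φ x * Wp x * ((Φ' x)ᴴ * Ψ x - (Φ x)ᴴ * Ψ' x)))ᴴ *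
        (Ψ x + (((κ:ℂ)^2 - (μ:ℂ)^2)⁻¹ : ℂ) •
          (Φ x * Wp x * ((Φ' x)ᴴ * Ψ x - (Φ x)ᴴ * Ψ' x)))
        - (Ψ x)ᴴ * Ψ x
        = ((((κ:ℂ)^2 - (μ:ℂ)^2)⁻¹ : ℂ) ^ 2) • d := by
  intro x hx
  have hx' : x ∈ Set.Ici (0:ℝ) := hx
  set q : ℝ → Matrix (Fin n) (Fin n) ℂ := fun t => (Φ' t)ᴴ * Ψ t - (Φ t)ᴴ * Ψ' t with hqdef
  set e : ℂ := (κ:ℂ)^2 - (μ:ℂ)^2 with hedef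
  have he : e ≠ 0 := by
    simp only [hedef, sub_ne_zero]
    exact_mod_cast fun h => hκμ (by exact_mod_cast h)
  -- derivative of q
  have hdq : HasDerivWithinAt q ((Φ'' x)ᴴ * Ψ x - (Φ x)ᴴ * Ψ'' x) (Set.Ici (0:ℝ)) x := by
    have h1 := matMulDeriv (matCTDeriv (hΦ2 x hx')) (hΨ1 x hx')
    have h2 := matMulDeriv (matCTDeriv (hΦ1 x hx')) (hΨ2 x hx')
    have := h1.sub h2
    convert this using 1
    case e'_9 => noncomm_ring
    all_goals rfl
  -- identify dq
  have hdq_eq : (Φ'' x)ᴴ * Ψ x - (Φ x)ᴴ * Ψ'' x = e • ((Φ x)ᴴ * Ψ x) := by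
    rw [hΦeq x hx, hΨeq x hx]
    have hκ : star ((κ:ℂ)^2) = (κ:ℂ)^2 := by
      simp [Complex.star_def, ← Complex.ofReal_pow, Complex.conj_ofReal]
    rw [conjTranspose_mul, conjTranspose_add, conjTranspose_smul, hVherm x hx,
      conjTranspose_one, hκ, hedef]
    simp only [Matrix.mul_add, Matrix.add_mul, Matrix.mul_smul, Matrix.smul_mul,
      Matrix.mul_one, Matrix.one_mul, Matrix.mul_assoc, sub_smul]
    abel
  set dq : Matrix (Fin n) (Fin n) ℂ := e • ((Φ x)ᴴ * Ψ x) with hdqdef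
  rw [hdq_eq] at hdq
  -- derivative of qᴴ Wp q
  have hW := hWp x hx'
  have hF := matMulDeriv (matMulDeriv (matCTDeriv hdq) hW) hdq
  refine ⟨_, hF, ?_⟩
  -- now algebra
  have hcstar : star (e⁻¹) = e⁻¹ := by
    simp [hedef, Complex.star_def, ← Complex.ofReal_pow, map_sub, Complex.conj_ofReal]
  have hWh := hWpherm x hx
  have hce : e⁻¹ ^ 2 * e = e⁻¹ := by
    field_simp
  rw [hdqdef]
  have hestar : star e = e := by
    simp [hedef, Complex.star_def, ← Complex.ofReal_pow, map_sub, Complex.conj_ofReal]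
  simp only [hqdef]
  simp only [conjTranspose_add, conjTranspose_smul, conjTranspose_mul, conjTranspose_sub,
    hWh, hcstar, hestar, conjTranspose_conjTranspose,
    Matrix.add_mul, Matrix.mul_add, Matrix.sub_mul, Matrix.mul_sub,
    Matrix.smul_mul, Matrix.mul_smul, smul_add,
    smul_smul, smul_sub, Matrix.mul_assoc]
  match_scalars <;> field_simp <;> ring
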